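/- Leanness of the derivation operators D_n and δ_n: fix n, ℓ, k ≥ 1. (a) For every ordinal β such that ω^β < Ω_{k+1} and ω^β is ℓ-lean, the ordinal D_n(ω^β) is ℓ·n·k-lean. (b) For every ℓ-lean ordinal α with 0 < α < Ω_{k+1}, every element of δ_n(α) is (ℓ + ℓ·n·k)-lean. -/

import Mathlib

/-! Ordinals below `ε₀` are represented in Cantor normal form by Mathlib's type `ONote`
(`ONote.oadd e n a` represents `ω^e·n + a`; `ONote.NF` is the Cantor normal form predicate). -/

/-- Number of `oadd` constructors (used as a termination measure). -/
def ONote.cnt : ONote → ℕ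
  | .zero => 0
  | .oadd e _ a => e.cnt + a.cnt + 1

/-- Natural (Hessenberg) sum `⊕` of two ordinal notations: merge the CNFs in
decreasing order of exponents, adding coefficients of equal exponents. -/
def ONote.nadd : ONote → ONote → ONote
  | .zero, y => y
  | .oadd e₁ n₁ a₁, .zero => .oadd e₁ n₁ a₁
  | .oadd e₁ n₁ a₁, .oadd e₂ n₂ a₂ =>
    match ONote.cmp e₁ e₂ with
    | .lt => .oadd e₂ n₂ (ONote.nadd (.oadd e₁ n₁ a₁) a₂)
    | .eq => .oadd e₁ (n₁ + n₂) (ONote.nadd a₁ a₂)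
    | .gt => .oadd e₁ n₁ (ONote.nadd a₁ (.oadd e₂ n₂ a₂))
  termination_by x y => x.cnt + y.cnt
  decreasing_by all_goals (simp [ONote.cnt] <;> omega)

/-- `scaleN e m t` is `ω^e·m + t` (which is just `t` when `m = 0`). -/
def ONote.scaleN (e : ONote) (m : ℕ) (t : ONote) : ONote :=
  match m with
  | 0 => t
  | m + 1 => .oadd e ⟨m + 1, Nat.succ_pos m⟩ t

/-- Ordinal multiplication by a natural number:
`(ω^e·c + a)·m = ω^e·(c·m) + a` for `m ≥ 1`, and `α·0 = 0`. -/
def ONote.omulNat : ONote → ℕ → ONote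
  | _, 0 => .zero
  | .zero, _ => .zero
  | .oadd e c a, m + 1 => .oadd e (c * ⟨m + 1, Nat.succ_pos m⟩) a

/-- Helper for `ONote.Dn`: `DnAux n pre β` computes
`⊕_i ω^{pre ⊕ (β minus its i-th group) ⊕ ω^{γ_i}·(c_i−1) ⊕ γ_i·(n−1) ⊕ D_n(ω^{γ_i})}·(c_i·n)`
where `β = ω^{γ_1}·c_1 + … + ω^{γ_d}·c_d` in strict CNF and `pre` accumulates the
already processed groups. -/
def ONote.DnAux (n : ℕ) : ONote → ONote → ONote
  | _, .zero => .zero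
  | pre, .oadd e c rest =>
    ONote.nadd
      (ONote.scaleN
        (ONote.nadd (ONote.nadd (ONote.nadd pre rest) (ONote.scaleN e ((c : ℕ) - 1) .zero))
          (ONote.nadd (ONote.omulNat e (n - 1)) (ONote.DnAux n .zero e)))
        ((c : ℕ) * n) .zero)
      (ONote.DnAux n (ONote.nadd pre (.oadd e c .zero)) rest)
  termination_by _ β => β.cnt
  decreasing_by all_goals (simp [ONote.cnt] <;> omega)

/-- `Dn n β` is `D_n(ω^β)` : `D_n(ω^0) = 0` and, for
`β = ω^{η_1} ⊕ … ⊕ ω^{η_m} > 0` in CNF,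
`D_n(ω^β) = ⊕_{i=1}^m ω^{(⊕_{p≠i} ω^{η_p}) ⊕ η_i·(n−1) ⊕ D_n(ω^{η_i})}·n`. -/
def ONote.Dn (n : ℕ) (β : ONote) : ONote :=
  ONote.DnAux n .zero β

/-- Helper for `ONote.deltaList`, processing the groups of the strict CNF one by one. -/
def ONote.deltaAux (n : ℕ) : ONote → ONote → List ONote
  | _, .zero => []
  | pre, .oadd e c rest =>
    (ONote.nadd (ONote.nadd pre rest)
        (ONote.nadd (ONote.scaleN e ((c : ℕ) - 1) .zero) (ONote.Dn n e)))
      :: ONote.deltaAux n (ONote.nadd pre (.oadd e c .zero)) rest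

/-- The finite set `δ_n(α)` (as a list) : for `α = ω^{β_1}·c_1 ⊕ … ⊕ ω^{β_d}·c_d > 0` in
strict CNF, `δ_n(α) = { (⊕_{p≠i} ω^{β_p}·c_p) ⊕ ω^{β_i}·(c_i−1) ⊕ D_n(ω^{β_i}) : 1 ≤ i ≤ d }`. -/
def ONote.deltaList (n : ℕ) (α : ONote) : List ONote :=
  ONote.deltaAux n .zero α

/-- `α` is `ℓ`-lean : every coefficient appearing hereditarily in the CNF of `α`
(in `α` and in all exponents) is at most `ℓ`. -/
def ONote.IsLean (l : ℕ) : ONote → Prop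
  | .zero => True
  | .oadd e c a => (c : ℕ) ≤ l ∧ ONote.IsLean l e ∧ ONote.IsLean l a

/-- `Ω_k`, the height-`k` tower of `ω` : `Ω_1 = ω` and `Ω_{k+1} = ω^{Ω_k}`
(with the convention `Ω_0 = 1`). -/
def ONote.OmegaTower : ℕ → ONote
  | 0 => 1
  | k + 1 => .oadd (ONote.OmegaTower k) 1 .zero

/-- `(Ω_k)_ℓ`, the `ℓ`-th element of the fundamental sequence of the tower `Ω_k` :
`(Ω_1)_ℓ = ℓ` and `(Ω_{k+1})_ℓ = ω^{(Ω_k)_ℓ}`. -/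
def ONote.towerFS : ℕ → ℕ → ONote
  | 0, l => ONote.ofNat l
  | 1, l => ONote.ofNat l
  | k + 2, l => .oadd (ONote.towerFS (k + 1) l) 1 .zero

/-- Classification of a CNF ordinal notation together with the fixed assignment of
fundamental sequences: `.inl none` for `0`, `.inl (some β)` for the successor of `β`, and
`.inr f` for a limit with fundamental sequence `f`. The assignment is the standard one:
`(γ + ω^{β+1})_x = γ + ω^β·x` and `(γ + ω^λ)_x = γ + ω^{λ_x}` for limit `λ`. -/
def ONote.fundSeq : ONote → (Option ONote) ⊕ (ℕ → ONote)
  | .zero => .inl none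
  | .oadd e c a =>
    match ONote.fundSeq a with
    | .inl (some a') => .inl (some (.oadd e c a'))
    | .inr f => .inr (fun x => .oadd e c (f x))
    | .inl none =>
      match e, ONote.fundSeq e with
      | .zero, _ => .inl (some (ONote.scaleN .zero ((c : ℕ) - 1) .zero))
      | _, .inl (some e') => .inr (fun x => ONote.scaleN e ((c : ℕ) - 1) (ONote.scaleN e' x .zero))
      | _, .inr f => .inr (fun x => ONote.scaleN e ((c : ℕ) - 1) (.oadd (f x) 1 .zero))
      | _, .inl none => .inl none

/-- The Hardy hierarchy `(H^α)_{α<ε₀}` for the successor function, as a relation: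
`HardyRel α n m` holds iff `H^α(n) = m`. It is the graph of the recursion
`H^0(x) = x`, `H^{α+1}(x) = H^α(x+1)`, `H^λ(x) = H^{λ_x}(x)`. -/
inductive HardyRel : ONote → ℕ → ℕ → Prop
  | zero (n : ℕ) : HardyRel .zero n n
  | succ {α β : ONote} {n m : ℕ} : ONote.fundSeq α = .inl (some β) →
      HardyRel β (n + 1) m → HardyRel α n m
  | limit {α : ONote} {f : ℕ → ONote} {n m : ℕ} : ONote.fundSeq α = .inr f →
      HardyRel (f n) n m → HardyRel α n m

/-- The Cichoń hierarchy `(h_α)_{α<ε₀}` for a function `h : ℕ → ℕ`, as a relation: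
`CichonRel h α x y` holds iff `h_α(x) = y`. It is the graph of the recursion
`h_0(x) = 0`, `h_{α+1}(x) = 1 + h_α(h(x))`, `h_λ(x) = h_{λ_x}(x)`. -/
inductive CichonRel (h : ℕ → ℕ) : ONote → ℕ → ℕ → Prop
  | zero (x : ℕ) : CichonRel h .zero x 0
  | succ {α β : ONote} {x y : ℕ} : ONote.fundSeq α = .inl (some β) →
      CichonRel h β (h x) y → CichonRel h α x (y + 1)
  | limit {α : ONote} {f : ℕ → ONote} {x y : ℕ} : ONote.fundSeq α = .inr f →
      CichonRel h (f x) x y → CichonRel h α x y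

/-- The `m`-predecessor operation `P_m`, as a relation: `PRel m α β` holds iff
`P_m(α) = β`, where `P_m(β+1) = β` and `P_m(λ) = P_m(λ_m)` for limit `λ`. -/
inductive PRel (m : ℕ) : ONote → ONote → Prop
  | succ {α β : ONote} : ONote.fundSeq α = .inl (some β) → PRel m α β
  | limit {α β : ONote} {f : ℕ → ONote} : ONote.fundSeq α = .inr f →
      PRel m (f m) β → PRel m α β

/-- The Hardy rewrite relation `→_H` on pairs of an ordinal below `ε₀` and a natural
number, generated by `(α+1, n) →_H (α, n+1)` and `(λ, n) →_H (λ_n, n)` for limit `λ`. -/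
inductive HStep : ONote × ℕ → ONote × ℕ → Prop
  | succ {α β : ONote} {n : ℕ} : ONote.fundSeq α = .inl (some β) → HStep (α, n) (β, n + 1)
  | limit {α : ONote} {f : ℕ → ONote} {n : ℕ} : ONote.fundSeq α = .inr f →
      HStep (α, n) (f n, n)

/-- `→*_H`, the reflexive-transitive closure of the Hardy rewrite relation. -/
def HardyRT : ONote × ℕ → ONote × ℕ → Prop :=
  Relation.ReflTransGen HStep

universe u

namespace Ordinal

/-- Natural (Hessenberg) sum of ordinals. -/
noncomputable def nadd (a b : Ordinal.{u}) : Ordinal.{u} :=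
  max (⨆ x : Set.Iio a, Order.succ (nadd x.1 b)) (⨆ x : Set.Iio b, Order.succ (nadd a x.1))
termination_by (a, b)
decreasing_by all_goals cases x; decreasing_tactic

theorem nadd_le_iff {a b c : Ordinal} :
    nadd a b ≤ c ↔ (∀ a' < a, nadd a' b < c) ∧ ∀ b' < b, nadd a b' < c := by
  have h1 : BddAbove (Set.range fun x : Set.Iio a => Order.succ (nadd x.1 b)) :=
    bddAbove_of_small
  have h2 : BddAbove (Set.range fun x : Set.Iio b => Order.succ (nadd a x.1)) :=
    bddAbove_of_small
  rw [nadd, max_le_iff, ciSup_le_iff' h1, ciSup_le_iff' h2]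
  simp only [Order.succ_le_iff, Subtype.forall, Set.mem_Iio]

theorem nadd_lt_nadd_right {b c : Ordinal} (h : b < c) (a : Ordinal) : nadd b a < nadd c a :=
  (nadd_le_iff.1 le_rfl).1 b h

theorem nadd_lt_nadd_left {b c : Ordinal} (h : b < c) (a : Ordinal) : nadd a b < nadd a c :=
  (nadd_le_iff.1 le_rfl).2 b h

theorem nadd_le_nadd_left {b c : Ordinal} (h : b ≤ c) (a : Ordinal) : nadd a b ≤ nadd a c := by
  rcases h.lt_or_eq with h | rfl
  · exact (nadd_lt_nadd_left h a).le
  · exact le_rfl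

theorem nadd_le_nadd_right {b c : Ordinal} (h : b ≤ c) (a : Ordinal) : nadd b a ≤ nadd c a := by
  rcases h.lt_or_eq with h | rfl
  · exact (nadd_lt_nadd_right h a).le
  · exact le_rfl

theorem lt_nadd_iff {a b c : Ordinal} :
    a < nadd b c ↔ (∃ b' < b, a ≤ nadd b' c) ∨ ∃ c' < c, a ≤ nadd b c' := by
  rw [← not_le, nadd_le_iff]
  simp only [not_and_or, not_forall, not_lt, exists_prop]

theorem nadd_comm (a b : Ordinal) : nadd a b = nadd b a := by
  induction a using Ordinal.induction generalizing b with
  | _ a IHa =>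
  induction b using Ordinal.induction with
  | _ b IHb =>
  apply le_antisymm
  · rw [nadd_le_iff]
    constructor
    · intro a' ha'; rw [IHa a' ha' b]; exact nadd_lt_nadd_left ha' b
    · intro b' hb'; rw [IHb b' hb']; exact nadd_lt_nadd_right hb' a
  · rw [nadd_le_iff]
    constructor
    · intro b' hb'; rw [← IHb b' hb']; exact nadd_lt_nadd_left hb' a
    · intro a' ha'; rw [← IHa a' ha' b]; exact nadd_lt_nadd_right ha' b

@[simp] theorem zero_nadd (a : Ordinal) : nadd 0 a = a := by
  induction a using Ordinal.induction with
  | _ a IH =>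
  apply le_antisymm
  · rw [nadd_le_iff]
    refine ⟨fun a' h => absurd h (by simp), fun b' h => ?_⟩
    rw [IH b' h]; exact h
  · apply le_of_forall_lt
    intro c hc
    rw [← IH c hc]
    exact nadd_lt_nadd_left hc 0

@[simp] theorem nadd_zero (a : Ordinal) : nadd a 0 = a := by
  rw [nadd_comm, zero_nadd]

theorem add_le_nadd (a b : Ordinal) : a + b ≤ nadd a b := by
  induction b using Ordinal.induction with
  | _ b IH =>
  apply le_of_forall_lt
  intro c hc
  rcases lt_or_ge c a with h | h
  · exact h.trans_le (by simpa using nadd_le_nadd_left (zero_le (a := b)) a)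
  · have e := Ordinal.add_sub_cancel_of_le h
    rw [← e] at hc ⊢
    have hd : c - a < b := (add_lt_add_iff_left a).1 hc
    exact (IH _ hd).trans_lt (nadd_lt_nadd_left hd a)

theorem nadd_assoc (a b c : Ordinal) : nadd (nadd a b) c = nadd a (nadd b c) := by
  induction a using Ordinal.induction generalizing b c with
  | _ a IHa =>
  induction b using Ordinal.induction generalizing c with
  | _ b IHb =>
  induction c using Ordinal.induction with
  | _ c IHc =>
  apply le_antisymm
  · rw [nadd_le_iff]
    constructor
    · intro x hx
      rcases lt_nadd_iff.1 hx with ⟨a', ha', hle⟩ | ⟨b', hb', hle⟩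
      · calc nadd x c ≤ nadd (nadd a' b) c := nadd_le_nadd_right hle c
          _ = nadd a' (nadd b c) := IHa a' ha' b c
          _ < nadd a (nadd b c) := nadd_lt_nadd_right ha' _
      · calc nadd x c ≤ nadd (nadd a b') c := nadd_le_nadd_right hle c
          _ = nadd a (nadd b' c) := IHb b' hb' c
          _ < nadd a (nadd b c) := nadd_lt_nadd_left (nadd_lt_nadd_right hb' c) a
    · intro c' hc'
      rw [IHc c' hc']
      exact nadd_lt_nadd_left (nadd_lt_nadd_left hc' b) a
  · rw [nadd_le_iff]
    constructor
    · intro a' ha'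
      rw [← IHa a' ha' b c]
      exact nadd_lt_nadd_right (nadd_lt_nadd_right ha' b) c
    · intro y hy
      rcases lt_nadd_iff.1 hy with ⟨b', hb', hle⟩ | ⟨c', hc', hle⟩
      · calc nadd a y ≤ nadd a (nadd b' c) := nadd_le_nadd_left hle a
          _ = nadd (nadd a b') c := (IHb b' hb' c).symm
          _ < nadd (nadd a b) c := nadd_lt_nadd_right (nadd_lt_nadd_left hb' a) c
      · calc nadd a y ≤ nadd a (nadd b c') := nadd_le_nadd_left hle a
          _ = nadd (nadd a b) c' := (IHc c' hc').symm
          _ < nadd (nadd a b) c := nadd_lt_nadd_left hc' _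

end Ordinal

infixl:65 " ♯ " => Ordinal.nadd

open Ordinal

namespace OrdAux

theorem decomp_lt_mul {γ u : Ordinal} {m : ℕ} (h : u < ω ^ γ * m) :
    ∃ (j : ℕ) (r : Ordinal), j < m ∧ r < ω ^ γ ∧ u = ω ^ γ * j + r := by
  have hω : (ω ^ γ : Ordinal) ≠ 0 := (opow_pos γ omega0_pos).ne'
  have hq : u / ω ^ γ < (m : Ordinal) := (Ordinal.div_lt hω).2 h
  have hqω : u / ω ^ γ < ω := hq.trans (nat_lt_omega0 m)
  obtain ⟨j, hj⟩ := Ordinal.lt_omega0.1 hqω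
  refine ⟨j, u % ω ^ γ, ?_, Ordinal.mod_lt u hω, ?_⟩
  · exact_mod_cast hj ▸ hq
  · rw [← hj, Ordinal.div_add_mod]

theorem decomp_lt_add {γ x u : Ordinal} {m : ℕ} (hx : x < ω ^ γ) (h : u < ω ^ γ * m + x) :
    (∃ a' < x, u = ω ^ γ * m + a') ∨ u < ω ^ γ * m := by
  rcases lt_or_ge u (ω ^ γ * m) with h' | h'
  · exact Or.inr h'
  · refine Or.inl ⟨u - ω ^ γ * m, ?_, (Ordinal.add_sub_cancel_of_le h').symm⟩
    have := Ordinal.add_sub_cancel_of_le h'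
    rw [← this] at h
    exact (add_lt_add_iff_left _).1 h

theorem mul_nat_lt_opow {γ δ : Ordinal} (hδ : δ < γ) (k : ℕ) : ω ^ δ * k < ω ^ γ := by
  calc ω ^ δ * (k : Ordinal) < ω ^ δ * ω :=
        (mul_lt_mul_iff_right₀ (opow_pos δ omega0_pos)).2 (nat_lt_omega0 k)
    _ = ω ^ (δ + 1) := by rw [opow_add, opow_one]
    _ ≤ ω ^ γ := opow_le_opow_right omega0_pos (Order.succ_le_of_lt hδ)

/-- Key facts: `ω^γ` is closed under natural sum, and natural sum respects CNF-style
decomposition `ω^γ·m + a`. -/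
theorem nadd_main : ∀ γ : Ordinal,
    (∀ a b, a < ω ^ γ → b < ω ^ γ → a ♯ b < ω ^ γ) ∧
    (∀ (m p : ℕ) (a b : Ordinal), a < ω ^ γ → b < ω ^ γ →
      (ω ^ γ * m + a) ♯ (ω ^ γ * p + b) = ω ^ γ * ((m + p : ℕ) : Ordinal) + (a ♯ b)) := by
  intro γ
  induction γ using Ordinal.induction with
  | _ γ IH =>
  have hC : ∀ a b, a < ω ^ γ → b < ω ^ γ → a ♯ b < ω ^ γ := by
    intro a b ha hb
    rcases eq_or_ne γ 0 with rfl | hγ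
    · simp only [opow_zero, Ordinal.lt_one_iff_zero] at ha hb ⊢
      subst ha; subst hb; simp
    · -- find δ < γ and n with a, b < ω^δ * n
      have key : ∀ x : Ordinal, x < ω ^ γ → ∃ δ < γ, ∃ n : ℕ, x < ω ^ δ * n := by
        intro x hx
        rcases Ordinal.zero_or_succ_or_isSuccLimit γ with rfl | ⟨δ, rfl⟩ | hl
        · exact absurd rfl hγ
        · rw [opow_succ] at hx
          obtain ⟨c', hc', hxc⟩ := (lt_mul_iff_of_isSuccLimit isSuccLimit_omega0).1 hx
          obtain ⟨n, hn⟩ := Ordinal.lt_omega0.1 hc'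
          exact ⟨δ, Order.lt_succ δ, n, hxc.trans_le (mul_le_mul_right hn.le _)⟩
        · obtain ⟨δ, hδ, hxδ⟩ := (lt_opow_of_isSuccLimit omega0_ne_zero hl).1 hx
          exact ⟨δ, hδ, 1, by simpa using hxδ⟩
      obtain ⟨δ₁, hδ₁, n₁, hn₁⟩ := key a ha
      obtain ⟨δ₂, hδ₂, n₂, hn₂⟩ := key b hb
      set δ := max δ₁ δ₂ with hδdef
      set n := max n₁ n₂ with hndef
      have hmono : ∀ (δ' : Ordinal) (n' : ℕ), δ' ≤ δ → n' ≤ n →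
          ω ^ δ' * n' ≤ ω ^ δ * n := by
        intro δ' n' h1 h2
        exact mul_le_mul' (opow_le_opow_right omega0_pos h1) (by exact_mod_cast Nat.cast_le.2 h2)
      have ha' : a < ω ^ δ * n := hn₁.trans_le (hmono δ₁ n₁ (le_max_left _ _) (le_max_left _ _))
      have hb' : b < ω ^ δ * n := hn₂.trans_le (hmono δ₂ n₂ (le_max_right _ _) (le_max_right _ _))
      have hδγ : δ < γ := max_lt hδ₁ hδ₂
      obtain ⟨m₁, r₁, _, hr₁, rfl⟩ := decomp_lt_mul ha'
      obtain ⟨m₂, r₂, _, hr₂, rfl⟩ := decomp_lt_mul hb'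
      rw [(IH δ hδγ).2 m₁ m₂ r₁ r₂ hr₁ hr₂]
      have : r₁ ♯ r₂ < ω ^ δ := (IH δ hδγ).1 r₁ r₂ hr₁ hr₂
      calc ω ^ δ * ((m₁ + m₂ : ℕ) : Ordinal) + (r₁ ♯ r₂)
            < ω ^ δ * ((m₁ + m₂ : ℕ) : Ordinal) + ω ^ δ := add_lt_add_right this _
        _ = ω ^ δ * ((m₁ + m₂ + 1 : ℕ) : Ordinal) := by push_cast; rw [mul_add_one]
        _ < ω ^ γ := mul_nat_lt_opow hδγ _
  refine ⟨hC, ?_⟩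
  have main : ∀ o : Ordinal, ∀ (m p : ℕ) (a b : Ordinal), a < ω ^ γ → b < ω ^ γ →
      (ω ^ γ * m + a) ♯ (ω ^ γ * p + b) = o →
      o = ω ^ γ * ((m + p : ℕ) : Ordinal) + (a ♯ b) := by
    intro o
    induction o using Ordinal.induction with
    | _ o IHo =>
    intro m p a b ha hb ho
    subst ho
    apply le_antisymm
    · rw [nadd_le_iff]
      constructor
      · intro x' hx'
        rcases decomp_lt_add ha hx' with ⟨a', ha', rfl⟩ | hsm
        · have hlt : (ω ^ γ * m + a') ♯ (ω ^ γ * p + b) < (ω ^ γ * m + a) ♯ (ω ^ γ * p + b) :=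
            nadd_lt_nadd_right (add_lt_add_right ha' _) _
          rw [IHo _ hlt m p a' b (ha'.trans ha) hb rfl]
          exact add_lt_add_right (nadd_lt_nadd_right ha' _) _
        · obtain ⟨j, r, hj, hr, rfl⟩ := decomp_lt_mul hsm
          have hlt : (ω ^ γ * j + r) ♯ (ω ^ γ * p + b) < (ω ^ γ * m + a) ♯ (ω ^ γ * p + b) :=
            nadd_lt_nadd_right (hsm.trans_le le_self_add) _
          rw [IHo _ hlt j p r b hr hb rfl]
          calc ω ^ γ * (j + p : ℕ) + (r ♯ b) < ω ^ γ * (j + p : ℕ) + ω ^ γ :=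
                add_lt_add_right (hC r b hr hb) _
            _ = ω ^ γ * ((j + p + 1 : ℕ) : Ordinal) := by push_cast; rw [mul_add_one]
            _ ≤ ω ^ γ * ((m + p : ℕ) : Ordinal) :=
                mul_le_mul_right (Nat.cast_le.2 (by omega)) _
            _ ≤ ω ^ γ * ((m + p : ℕ) : Ordinal) + (a ♯ b) := le_self_add
      · intro y' hy'
        rcases decomp_lt_add hb hy' with ⟨b', hb', rfl⟩ | hsm
        · have hlt : (ω ^ γ * m + a) ♯ (ω ^ γ * p + b') < (ω ^ γ * m + a) ♯ (ω ^ γ * p + b) :=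
            nadd_lt_nadd_left (add_lt_add_right hb' _) _
          rw [IHo _ hlt m p a b' ha (hb'.trans hb) rfl]
          exact add_lt_add_right (nadd_lt_nadd_left hb' _) _
        · obtain ⟨j, r, hj, hr, rfl⟩ := decomp_lt_mul hsm
          have hlt : (ω ^ γ * m + a) ♯ (ω ^ γ * j + r) < (ω ^ γ * m + a) ♯ (ω ^ γ * p + b) :=
            nadd_lt_nadd_left (hsm.trans_le le_self_add) _
          rw [IHo _ hlt m j a r ha hr rfl]
          calc ω ^ γ * (m + j : ℕ) + (a ♯ r) < ω ^ γ * (m + j : ℕ) + ω ^ γ :=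
                add_lt_add_right (hC a r ha hr) _
            _ = ω ^ γ * ((m + j + 1 : ℕ) : Ordinal) := by push_cast; rw [mul_add_one]
            _ ≤ ω ^ γ * ((m + p : ℕ) : Ordinal) :=
                mul_le_mul_right (Nat.cast_le.2 (by omega)) _
            _ ≤ ω ^ γ * ((m + p : ℕ) : Ordinal) + (a ♯ b) := le_self_add
    · have hab : a ♯ b < ω ^ γ := hC a b ha hb
      apply le_of_forall_lt
      intro z hz
      rcases decomp_lt_add hab hz with ⟨w, hw, rfl⟩ | hsm
      · rcases lt_nadd_iff.1 hw with ⟨a', ha', hle⟩ | ⟨b', hb', hle⟩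
        · have hlt : (ω ^ γ * m + a') ♯ (ω ^ γ * p + b) < (ω ^ γ * m + a) ♯ (ω ^ γ * p + b) :=
            nadd_lt_nadd_right (add_lt_add_right ha' _) _
          have := IHo _ hlt m p a' b (ha'.trans ha) hb rfl
          calc ω ^ γ * ((m + p : ℕ) : Ordinal) + w
              ≤ ω ^ γ * ((m + p : ℕ) : Ordinal) + (a' ♯ b) := add_le_add_right hle _
            _ = (ω ^ γ * m + a') ♯ (ω ^ γ * p + b) := this.symm
            _ < _ := hlt
        · have hlt : (ω ^ γ * m + a) ♯ (ω ^ γ * p + b') < (ω ^ γ * m + a) ♯ (ω ^ γ * p + b) :=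
            nadd_lt_nadd_left (add_lt_add_right hb' _) _
          have := IHo _ hlt m p a b' ha (hb'.trans hb) rfl
          calc ω ^ γ * ((m + p : ℕ) : Ordinal) + w
              ≤ ω ^ γ * ((m + p : ℕ) : Ordinal) + (a ♯ b') := add_le_add_right hle _
            _ = (ω ^ γ * m + a) ♯ (ω ^ γ * p + b') := this.symm
            _ < _ := hlt
      · calc z < ω ^ γ * ((m + p : ℕ) : Ordinal) := hsm
          _ = ω ^ γ * m + ω ^ γ * p := by push_cast [mul_add]; ring
          _ ≤ (ω ^ γ * m + a) + (ω ^ γ * p + b) :=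
              add_le_add le_self_add le_self_add
          _ ≤ (ω ^ γ * m + a) ♯ (ω ^ γ * p + b) := add_le_nadd _ _
  intro m p a b ha hb
  exact main _ m p a b ha hb rfl

end OrdAux

namespace ONote
open Ordinal

theorem repr_oadd'' (e : ONote) (n : ℕ+) (a : ONote) :
    repr (oadd e n a) = ω ^ repr e * (n : ℕ) + repr a := rfl

/-- Exponent-nesting depth of an ordinal notation. -/
def hdepth : ONote → ℕ
  | zero => 0
  | oadd e _ a => max (e.hdepth + 1) a.hdepth

/-- `MemExp f x` : `f` is one of the top-level exponents of `x`. -/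
def MemExp (f : ONote) : ONote → Prop
  | zero => False
  | oadd e _ a => f = e ∨ MemExp f a

theorem isLean_zero (l : ℕ) : IsLean l zero := by simp [ONote.IsLean]

theorem isLean_oadd_iff {l : ℕ} {e a : ONote} {c : ℕ+} :
    IsLean l (oadd e c a) ↔ (c : ℕ) ≤ l ∧ IsLean l e ∧ IsLean l a := by
  simp [ONote.IsLean]

theorem isLean_mono {l l' : ℕ} (h : l ≤ l') : ∀ {x : ONote}, IsLean l x → IsLean l' x := by
  intro x
  induction x with
  | zero => intro _; exact isLean_zero _
  | oadd e c a ihe iha =>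
    intro hx
    rw [isLean_oadd_iff] at hx ⊢
    exact ⟨hx.1.trans h, ihe hx.2.1, iha hx.2.2⟩

theorem memExp_nadd : ∀ {x y f : ONote}, MemExp f (nadd x y) → MemExp f x ∨ MemExp f y := by
  intro x y
  induction x, y using nadd.induct with
  | case1 y => intro f h; rw [nadd] at h; exact Or.inr h
  | case2 e₁ n₁ a₁ => intro f h; rw [nadd] at h; exact Or.inl h
  | case3 e₁ n₁ a₁ e₂ n₂ a₂ hc ih =>
    intro f h
    rw [nadd, hc] at h
    rcases h with rfl | h
    · exact Or.inr (Or.inl rfl)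
    · rcases ih h with h | h
      · exact Or.inl h
      · exact Or.inr (Or.inr h)
  | case4 e₁ n₁ a₁ e₂ n₂ a₂ hc ih =>
    intro f h
    rw [nadd, hc] at h
    rcases h with rfl | h
    · exact Or.inl (Or.inl rfl)
    · rcases ih h with h | h
      · exact Or.inl (Or.inr h)
      · exact Or.inr (Or.inr h)
  | case5 e₁ n₁ a₁ e₂ n₂ a₂ hc ih =>
    intro f h
    rw [nadd, hc] at h
    rcases h with rfl | h
    · exact Or.inl (Or.inl rfl)
    · rcases ih h with h | h
      · exact Or.inl (Or.inr h)
      · exact Or.inr h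

theorem isLean_nadd : ∀ {x y : ONote} {l₁ l₂ : ℕ},
    IsLean l₁ x → IsLean l₂ y → IsLean (l₁ + l₂) (nadd x y) := by
  intro x y
  induction x, y using nadd.induct with
  | case1 y => intro l₁ l₂ _ hy; rw [nadd]; exact isLean_mono (Nat.le_add_left _ _) hy
  | case2 e₁ n₁ a₁ => intro l₁ l₂ hx _; rw [nadd]; exact isLean_mono (Nat.le_add_right _ _) hx
  | case3 e₁ n₁ a₁ e₂ n₂ a₂ hc ih =>
    intro l₁ l₂ hx hy
    rw [isLean_oadd_iff] at hy
    rw [nadd, hc, isLean_oadd_iff]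
    exact ⟨hy.1.trans (Nat.le_add_left _ _), isLean_mono (Nat.le_add_left _ _) hy.2.1,
      ih hx hy.2.2⟩
  | case4 e₁ n₁ a₁ e₂ n₂ a₂ hc ih =>
    intro l₁ l₂ hx hy
    rw [isLean_oadd_iff] at hx hy
    rw [nadd, hc, isLean_oadd_iff]
    refine ⟨?_, isLean_mono (Nat.le_add_right _ _) hx.2.1, ih hx.2.2 hy.2.2⟩
    rw [PNat.add_coe]
    exact Nat.add_le_add hx.1 hy.1
  | case5 e₁ n₁ a₁ e₂ n₂ a₂ hc ih =>
    intro l₁ l₂ hx hy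
    rw [isLean_oadd_iff] at hx
    rw [nadd, hc, isLean_oadd_iff]
    exact ⟨hx.1.trans (Nat.le_add_right _ _), isLean_mono (Nat.le_add_right _ _) hx.2.1,
      ih hx.2.2 hy⟩

theorem isLean_nadd_distinct : ∀ {x y : ONote} {l : ℕ},
    (∀ f g, MemExp f x → MemExp g y → f ≠ g) →
    IsLean l x → IsLean l y → IsLean l (nadd x y) := by
  intro x y
  induction x, y using nadd.induct with
  | case1 y => intro l _ _ hy; rw [nadd]; exact hy
  | case2 e₁ n₁ a₁ => intro l _ hx _; rw [nadd]; exact hx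
  | case3 e₁ n₁ a₁ e₂ n₂ a₂ hc ih =>
    intro l hne hx hy
    rw [isLean_oadd_iff] at hy
    rw [nadd, hc, isLean_oadd_iff]
    exact ⟨hy.1, hy.2.1, ih (fun f g hf hg => hne f g hf (Or.inr hg)) hx hy.2.2⟩
  | case4 e₁ n₁ a₁ e₂ n₂ a₂ hc ih =>
    intro l hne hx hy
    exact absurd (eq_of_cmp_eq hc) (hne e₁ e₂ (Or.inl rfl) (Or.inl rfl))
  | case5 e₁ n₁ a₁ e₂ n₂ a₂ hc ih =>
    intro l hne hx hy
    rw [isLean_oadd_iff] at hx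
    rw [nadd, hc, isLean_oadd_iff]
    exact ⟨hx.1, hx.2.1, ih (fun f g hf hg => hne f g (Or.inr hf) hg) hx.2.2 hy⟩

theorem lt_of_cmp_lt {x y : ONote} (hx : NF x) (hy : NF y) (h : cmp x y = Ordering.lt) :
    repr x < repr y := by
  have hc := @cmp_compares x y hx hy
  rw [h] at hc
  exact lt_def.1 hc

theorem nfBelow_nadd : ∀ {x y : ONote} {b : Ordinal},
    NFBelow x b → NFBelow y b → NFBelow (nadd x y) b := by
  intro x y
  induction x, y using nadd.induct with
  | case1 y => intro b _ hy; rw [nadd]; exact hy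
  | case2 e₁ n₁ a₁ => intro b hx _; rw [nadd]; exact hx
  | case3 e₁ n₁ a₁ e₂ n₂ a₂ hc ih =>
    intro b hx hy
    rw [nadd, hc]
    have h12 : repr e₁ < repr e₂ := lt_of_cmp_lt hx.fst hy.fst hc
    exact NFBelow.oadd hy.fst (ih (NFBelow.oadd hx.fst hx.snd h12) hy.snd) hy.lt
  | case4 e₁ n₁ a₁ e₂ n₂ a₂ hc ih =>
    intro b hx hy
    rw [nadd, hc]
    obtain rfl : e₁ = e₂ := eq_of_cmp_eq hc
    exact NFBelow.oadd hx.fst (ih hx.snd hy.snd) hx.lt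
  | case5 e₁ n₁ a₁ e₂ n₂ a₂ hc ih =>
    intro b hx hy
    rw [nadd, hc]
    have h21 : repr e₂ < repr e₁ := by
      have hc' := @cmp_compares e₁ e₂ hx.fst hy.fst
      rw [hc] at hc'
      exact lt_def.1 hc'
    exact NFBelow.oadd hx.fst (ih hx.snd (NFBelow.oadd hy.fst hy.snd h21)) hx.lt

theorem nf_nadd {x y : ONote} (hx : NF x) (hy : NF y) : NF (nadd x y) := by
  obtain ⟨b₁, h₁⟩ := hx.out
  obtain ⟨b₂, h₂⟩ := hy.out
  exact ⟨⟨max b₁ b₂, nfBelow_nadd (h₁.mono (le_max_left _ _)) (h₂.mono (le_max_right _ _))⟩⟩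

theorem repr_nadd : ∀ {x y : ONote}, NF x → NF y → repr (nadd x y) = repr x ♯ repr y := by
  intro x y
  induction x, y using nadd.induct with
  | case1 y =>
    intro _ _
    rw [nadd]
    show repr y = repr zero ♯ repr y
    rw [show repr zero = 0 from rfl, zero_nadd]
  | case2 e₁ n₁ a₁ =>
    intro _ _
    rw [nadd]
    show _ = _ ♯ repr zero
    rw [show repr zero = 0 from rfl, nadd_zero]
  | case3 e₁ n₁ a₁ e₂ n₂ a₂ hc ih =>
    intro hx hy
    rw [nadd, hc]
    have h12 : repr e₁ < repr e₂ := lt_of_cmp_lt hx.fst hy.fst hc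
    have hxlt : repr (oadd e₁ n₁ a₁) < ω ^ repr e₂ :=
      (NFBelow.oadd hx.fst hx.snd' h12 : NFBelow (oadd e₁ n₁ a₁) (repr e₂)).repr_lt
    have halt : repr a₂ < ω ^ repr e₂ := hy.snd'.repr_lt
    have key : repr (oadd e₁ n₁ a₁) ♯ (ω ^ repr e₂ * (n₂ : ℕ) + repr a₂) =
        ω ^ repr e₂ * (n₂ : ℕ) + (repr (oadd e₁ n₁ a₁) ♯ repr a₂) := by
      have h := (OrdAux.nadd_main (repr e₂)).2 0 (n₂ : ℕ) (repr (oadd e₁ n₁ a₁)) (repr a₂)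
        hxlt halt
      simpa using h
    rw [repr_oadd'' e₂ n₂ (nadd (oadd e₁ n₁ a₁) a₂), ih hx hy.snd,
      repr_oadd'' e₂ n₂ a₂]
    exact key.symm
  | case4 e₁ n₁ a₁ e₂ n₂ a₂ hc ih =>
    intro hx hy
    rw [nadd, hc]
    obtain rfl : e₁ = e₂ := eq_of_cmp_eq hc
    have ha₁ : repr a₁ < ω ^ repr e₁ := hx.snd'.repr_lt
    have ha₂ : repr a₂ < ω ^ repr e₁ := hy.snd'.repr_lt
    have key := (OrdAux.nadd_main (repr e₁)).2 (n₁ : ℕ) (n₂ : ℕ) (repr a₁) (repr a₂) ha₁ ha₂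
    rw [repr_oadd'' e₁ (n₁ + n₂) (nadd a₁ a₂), ih hx.snd hy.snd,
      repr_oadd'' e₁ n₁ a₁, repr_oadd'' e₁ n₂ a₂, key, PNat.add_coe, Nat.cast_add]
  | case5 e₁ n₁ a₁ e₂ n₂ a₂ hc ih =>
    intro hx hy
    rw [nadd, hc]
    have h21 : repr e₂ < repr e₁ := by
      have hc' := @cmp_compares e₁ e₂ hx.fst hy.fst
      rw [hc] at hc'
      exact lt_def.1 hc'
    have hylt : repr (oadd e₂ n₂ a₂) < ω ^ repr e₁ :=
      (NFBelow.oadd hy.fst hy.snd' h21 : NFBelow (oadd e₂ n₂ a₂) (repr e₁)).repr_lt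
    have halt : repr a₁ < ω ^ repr e₁ := hx.snd'.repr_lt
    have key : (ω ^ repr e₁ * (n₁ : ℕ) + repr a₁) ♯ repr (oadd e₂ n₂ a₂) =
        ω ^ repr e₁ * (n₁ : ℕ) + (repr a₁ ♯ repr (oadd e₂ n₂ a₂)) := by
      have h := (OrdAux.nadd_main (repr e₁)).2 (n₁ : ℕ) 0 (repr a₁) (repr (oadd e₂ n₂ a₂))
        halt hylt
      simpa using h
    rw [repr_oadd'' e₁ n₁ (nadd a₁ (oadd e₂ n₂ a₂)), ih hx.snd hy,
      repr_oadd'' e₁ n₁ a₁]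
    exact key.symm

end ONote

namespace ONote
open Ordinal

theorem repr_eq_of_nf {x y : ONote} (hx : NF x) (hy : NF y) (h : repr x = repr y) : x = y :=
  (@repr_inj x y hx hy).1 h

theorem repr_lt_opow_repr : ∀ {x : ONote}, NF x → repr x < ω ^ repr x := by
  intro x
  induction x with
  | zero => simp [show repr zero = 0 from rfl]
  | oadd e c a ihe iha =>
    intro hx
    have he : repr e < ω ^ repr e := ihe hx.fst
    have h1 : repr e < repr (oadd e c a) := he.trans_le (omega0_le_oadd e c a)
    have h2 : repr (oadd e c a) < ω ^ (repr e + 1) := by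
      rw [repr_oadd'', opow_add, opow_one]
      calc ω ^ repr e * (c : ℕ) + repr a < ω ^ repr e * (c : ℕ) + ω ^ repr e :=
            add_lt_add_right hx.snd'.repr_lt _
        _ = ω ^ repr e * ((c : ℕ) + 1) := by rw [mul_add_one]
        _ ≤ ω ^ repr e * ω := mul_le_mul_right (le_of_lt (by
            exact_mod_cast nat_lt_omega0 ((c : ℕ) + 1))) _
    exact h2.trans_le (opow_le_opow_right omega0_pos (Order.add_one_le_of_lt h1))

theorem nfBelow_self {x : ONote} (hx : NF x) : NFBelow x (repr x) := by
  cases x with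
  | zero => exact NFBelow.zero
  | oadd e c a =>
    exact NFBelow.oadd hx.fst hx.snd'
      ((repr_lt_opow_repr hx.fst).trans_le (omega0_le_oadd e c a))

theorem nf_of_memExp : ∀ {x : ONote} {b : Ordinal} {g : ONote},
    NFBelow x b → MemExp g x → NF g ∧ repr g < b := by
  intro x
  induction x with
  | zero => intro b g _ h; exact absurd h id
  | oadd e c a ihe iha =>
    intro b g hx hg
    rcases hg with rfl | hg
    · exact ⟨hx.fst, hx.lt⟩
    · obtain ⟨h1, h2⟩ := iha hx.snd hg
      exact ⟨h1, h2.trans hx.lt⟩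

/-! scaleN lemmas -/

theorem repr_scaleN (e : ONote) (m : ℕ) : repr (scaleN e m zero) = ω ^ repr e * m := by
  cases m with
  | zero => simp [ONote.scaleN, show repr zero = 0 from rfl]
  | succ m =>
    rw [ONote.scaleN]
    exact (repr_oadd'' e ⟨m + 1, Nat.succ_pos m⟩ zero).trans (by simp [show repr zero = 0 from rfl])

theorem isLean_scaleN {l m : ℕ} {e t : ONote} (hm : m ≤ l) (he : IsLean l e)
    (ht : IsLean l t) : IsLean l (scaleN e m t) := by
  cases m with
  | zero => exact ht
  | succ m => rw [ONote.scaleN]; exact isLean_oadd_iff.2 ⟨hm, he, ht⟩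

theorem memExp_scaleN {f e t : ONote} {m : ℕ} (h : MemExp f (scaleN e m t)) :
    f = e ∨ MemExp f t := by
  cases m with
  | zero => exact Or.inr h
  | succ m => exact h

theorem nfBelow_scaleN {e t : ONote} {m : ℕ} {b : Ordinal} (he : NF e) (hre : repr e < b)
    (ht : NFBelow t (repr e)) : NFBelow (scaleN e m t) b := by
  cases m with
  | zero => exact ht.mono hre.le
  | succ m => exact NFBelow.oadd he ht hre

theorem nf_scaleN {e t : ONote} {m : ℕ} (he : NF e) (ht : NFBelow t (repr e)) :
    NF (scaleN e m t) :=
  ⟨⟨repr e + 1, nfBelow_scaleN he (lt_add_one _) ht⟩⟩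

/-! omulNat lemmas -/

theorem isLean_omulNat {l m : ℕ} {x : ONote} (h : IsLean l x) : IsLean (l * m) (omulNat x m) := by
  cases x with
  | zero => cases m <;> exact isLean_zero _
  | oadd e c a =>
    cases m with
    | zero => exact isLean_zero _
    | succ m =>
      rw [isLean_oadd_iff] at h
      rw [ONote.omulNat, isLean_oadd_iff]
      refine ⟨?_, isLean_mono (Nat.le_mul_of_pos_right l (Nat.succ_pos m)) h.2.1,
        isLean_mono (Nat.le_mul_of_pos_right l (Nat.succ_pos m)) h.2.2⟩
      show (c : ℕ) * (m + 1) ≤ l * (m + 1)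
      exact Nat.mul_le_mul h.1 le_rfl

theorem nfBelow_omulNat {x : ONote} {b : Ordinal} {m : ℕ} (h : NFBelow x b) :
    NFBelow (omulNat x m) b := by
  cases x with
  | zero => cases m <;> exact NFBelow.zero
  | oadd e c a =>
    cases m with
    | zero => exact NFBelow.zero
    | succ m => rw [ONote.omulNat]; exact NFBelow.oadd h.fst h.snd h.lt

theorem memExp_omulNat {f x : ONote} {m : ℕ} (h : MemExp f (omulNat x m)) : MemExp f x := by
  cases x with
  | zero => cases m <;> exact absurd h id
  | oadd e c a =>
    cases m with
    | zero => exact absurd h id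
    | succ m => exact h

/-! tower and depth -/

theorem repr_omegaTower_succ (k : ℕ) :
    repr (OmegaTower (k + 1)) = ω ^ repr (OmegaTower k) := by
  rw [ONote.OmegaTower, repr_oadd'']
  simp

theorem hdepth_le_of_lt_tower : ∀ (x : ONote) (k : ℕ), NF x →
    repr x < repr (OmegaTower k) → hdepth x ≤ k := by
  intro x
  induction x with
  | zero => intro k _ _; simp [hdepth]
  | oadd e c a ihe iha =>
    intro k hx hlt
    have hge : (1 : Ordinal) ≤ repr (oadd e c a) :=
      le_trans (Order.one_le_iff_pos.2 (opow_pos (repr e) omega0_pos)) (omega0_le_oadd e c a)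
    cases k with
    | zero =>
      exfalso
      have h1 : repr (OmegaTower 0) = 1 := by rw [ONote.OmegaTower, ← ofNat_one, repr_ofNat]; norm_num
      rw [h1] at hlt
      exact absurd (hge.trans_lt hlt) (lt_irrefl _)
    | succ k =>
      rw [repr_omegaTower_succ] at hlt
      have he : repr e < repr (OmegaTower k) :=
        (opow_lt_opow_iff_right one_lt_omega0).1 ((omega0_le_oadd e c a).trans_lt hlt)
      have ha : repr a < ω ^ repr (OmegaTower k) := by
        refine lt_of_le_of_lt ?_ hlt
        rw [repr_oadd'']
        exact le_add_self
      have h2 : hdepth e ≤ k := ihe k hx.fst he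
      have h3 : hdepth a ≤ k + 1 := iha (k + 1) hx.snd (by rwa [repr_omegaTower_succ])
      simp only [hdepth]
      omega

end ONote

namespace ONote
open Ordinal

theorem nadd_rotate (p r s y : Ordinal) : ((p ♯ r) ♯ s) ♯ y = p ♯ (s ♯ (r ♯ y)) := by
  rw [nadd_assoc (p ♯ r) s y, nadd_assoc p r (s ♯ y), ← nadd_assoc r s y, nadd_comm r s,
    nadd_assoc s r y]

theorem masterDAux (n l : ℕ) (hn : 1 ≤ n) (hl : 1 ≤ l) : ∀ (N k : ℕ) (β pre : ONote),
    β.cnt ≤ N →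
    β.NF → IsLean l β → hdepth β ≤ k →
    pre.NF → IsLean l pre →
    (∀ f g, MemExp f pre → MemExp g β → repr g < repr f) →
    IsLean (l * n * k) (DnAux n pre β) ∧
    NFBelow (DnAux n pre β) (repr pre ♯ repr β) ∧
    (∀ X, MemExp X (DnAux n pre β) → ∃ w, repr X = repr pre ♯ w) := by
  intro N
  induction N with
  | zero =>
    intro k β pre hcnt _ _ _ _ _ _
    cases β with
    | zero => rw [DnAux]; exact ⟨isLean_zero _, NFBelow.zero, fun X h => absurd h id⟩
    | oadd e c rest =>
      exfalso
      have h : e.cnt + rest.cnt + 1 ≤ 0 := hcnt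
      omega
  | succ N IH =>
  intro k β pre hcnt hβnf hβlean hβd hprenf hprelean hsep
  cases β with
  | zero =>
    rw [DnAux]
    exact ⟨isLean_zero _, NFBelow.zero, fun X h => absurd h id⟩
  | oadd e c rest =>
    have hβd' : max (hdepth e + 1) (hdepth rest) ≤ k := hβd
    cases k with
    | zero => exfalso; omega
    | succ k =>
      have hNFe : NF e := hβnf.fst
      have hNFrest : NF rest := hβnf.snd
      have hrb : NFBelow rest (repr e) := hβnf.snd'
      rw [isLean_oadd_iff] at hβlean
      obtain ⟨hce, hle, hlrest⟩ := hβlean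
      have hcpos : 0 < (c : ℕ) := c.pos
      have hde : hdepth e ≤ k := by omega
      have hdrest : hdepth rest ≤ k + 1 := by omega
      -- the recursive call on the exponent e
      have hcnt' : e.cnt + rest.cnt + 1 ≤ N + 1 := hcnt
      obtain ⟨hDlean, hDb0, -⟩ := IH k e zero (by omega) hNFe hle hde NF.zero
        (isLean_zero _) (fun f _ hf _ => absurd hf id)
      have hDb : NFBelow (DnAux n zero e) (repr e) := by
        rwa [show repr (zero : ONote) = 0 from rfl, zero_nadd] at hDb0
      have hNFD : NF (DnAux n zero e) := ⟨⟨_, hDb⟩⟩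
      -- separation facts
      have hsepr : ∀ g, MemExp g rest → repr g < repr e := fun g hg => (nf_of_memExp hrb hg).2
      have hsepE : ∀ f, MemExp f pre → repr e < repr f := fun f hf => hsep f e hf (Or.inl rfl)
      rw [DnAux]
      set D := DnAux n zero e with hDdef
      set Yt := nadd (omulNat e (n - 1)) D with hYdef
      set S := scaleN e ((c : ℕ) - 1) zero with hSdef
      set PR := nadd pre rest with hPRdef
      set X := nadd PR S with hXdef
      set E := nadd X Yt with hEdef
      set pre' := nadd pre (oadd e c zero) with hpredef
      set R := DnAux n pre' rest with hRdef
      -- facts about the pieces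
      have hNFS : NF S := nf_scaleN hNFe NFBelow.zero
      have hreprS : repr S = ω ^ repr e * (((c : ℕ) - 1 : ℕ) : Ordinal) := repr_scaleN _ _
      have hPRlean : IsLean l PR := by
        refine isLean_nadd_distinct ?_ hprelean hlrest
        intro f g hf hg hfg
        subst hfg
        exact absurd (hsep f f hf (Or.inr hg)) (lt_irrefl _)
      have hNFPR : NF PR := nf_nadd hprenf hNFrest
      have hXlean : IsLean l X := by
        refine isLean_nadd_distinct ?_ hPRlean (isLean_scaleN (by omega) hle (isLean_zero _))
        intro f g hf hg
        rcases memExp_scaleN hg with rfl | hg'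
        · rcases memExp_nadd hf with hf | hf
          · intro hfg; subst hfg; exact absurd (hsepE _ hf) (lt_irrefl _)
          · intro hfg; subst hfg; exact absurd (hsepr _ hf) (lt_irrefl _)
        · exact absurd hg' id
      have hNFX : NF X := nf_nadd hNFPR hNFS
      have hYb : NFBelow Yt (repr e) := nfBelow_nadd (nfBelow_omulNat (nfBelow_self hNFe)) hDb
      have hNFY : NF Yt := ⟨⟨_, hYb⟩⟩
      have hYlean : IsLean (l * (n - 1) + l * n * k) Yt := isLean_nadd (isLean_omulNat hle) hDlean
      have harith : l + (l * (n - 1) + l * n * k) = l * n * (k + 1) := by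
        cases n with
        | zero => omega
        | succ m => simp only [Nat.succ_sub_one]; ring
      have hElean : IsLean (l * n * (k + 1)) E := by
        have h := isLean_nadd hXlean hYlean
        rwa [harith] at h
      have hNFE : NF E := nf_nadd hNFX hNFY
      have hu : repr rest ♯ repr Yt < ω ^ repr e :=
        (OrdAux.nadd_main (repr e)).1 _ _ hrb.repr_lt hYb.repr_lt
      have hreprE : repr E =
          repr pre ♯ (ω ^ repr e * (((c : ℕ) - 1 : ℕ) : Ordinal) + (repr rest ♯ repr Yt)) := by
        rw [hEdef, hXdef, hPRdef, repr_nadd (hXdef ▸ hNFX) hNFY, repr_nadd hNFPR hNFS,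
          repr_nadd hprenf hNFrest, hreprS, nadd_rotate]
        congr 1
        have h := (OrdAux.nadd_main (repr e)).2 ((c : ℕ) - 1) 0 0 (repr rest ♯ repr Yt)
          (opow_pos _ omega0_pos) hu
        simpa using h
      have hv : ω ^ repr e * (((c : ℕ) - 1 : ℕ) : Ordinal) + (repr rest ♯ repr Yt) <
          ω ^ repr e * ((c : ℕ) : Ordinal) := by
        calc ω ^ repr e * (((c : ℕ) - 1 : ℕ) : Ordinal) + (repr rest ♯ repr Yt)
            < ω ^ repr e * (((c : ℕ) - 1 : ℕ) : Ordinal) + ω ^ repr e := add_lt_add_right hu _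
          _ = ω ^ repr e * ((((c : ℕ) - 1) + 1 : ℕ) : Ordinal) := by push_cast; rw [mul_add_one]
          _ = ω ^ repr e * ((c : ℕ) : Ordinal) := by
              congr 2
              omega
      have hElt : repr E < repr pre ♯ ω ^ repr e * ((c : ℕ) : Ordinal) := by
        rw [hreprE]; exact nadd_lt_nadd_left hv _
      -- the accumulated prefix
      have hNFoadde : NF (oadd e c zero) := hNFe.oadd c NFBelow.zero
      have hNFpre' : NF pre' := nf_nadd hprenf hNFoadde
      have hreprpre' : repr pre' = repr pre ♯ ω ^ repr e * ((c : ℕ) : Ordinal) := by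
        rw [hpredef, repr_nadd hprenf hNFoadde, repr_oadd'']
        simp [show repr zero = 0 from rfl]
      have hpre'lean : IsLean l pre' := by
        refine isLean_nadd_distinct ?_ hprelean (isLean_oadd_iff.2 ⟨hce, hle, isLean_zero _⟩)
        intro f g hf hg
        rcases hg with rfl | hg
        · intro hfg; subst hfg; exact absurd (hsepE _ hf) (lt_irrefl _)
        · exact absurd hg id
      have hsep' : ∀ f g, MemExp f pre' → MemExp g rest → repr g < repr f := by
        intro f g hf hg
        rcases memExp_nadd hf with hf | hf
        · exact hsep f g hf (Or.inr hg)
        · rcases hf with rfl | hf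
          · exact hsepr g hg
          · exact absurd hf id
      obtain ⟨hRlean, hRb, hRlow⟩ := IH (k + 1) rest pre' (by omega) hNFrest hlrest hdrest
        hNFpre' hpre'lean hsep'
      have hreprβ : repr pre ♯ repr (oadd e c rest) = repr pre' ♯ repr rest := by
        rw [hreprpre', repr_oadd'', nadd_assoc]
        congr 1
        have h := (OrdAux.nadd_main (repr e)).2 (c : ℕ) 0 0 (repr rest)
          (opow_pos _ omega0_pos) hrb.repr_lt
        simpa using h.symm
      have hT1lean : IsLean (l * n * (k + 1)) (scaleN E ((c : ℕ) * n) zero) := by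
        refine isLean_scaleN ?_ hElean (isLean_zero _)
        have h1 : (c : ℕ) * n ≤ l * n := Nat.mul_le_mul hce le_rfl
        exact h1.trans (Nat.le_mul_of_pos_right (l * n) (Nat.succ_pos k))
      have hlow' : ∀ g, MemExp g R → repr E < repr g := by
        intro g hg
        obtain ⟨w, hw⟩ := hRlow g hg
        refine hElt.trans_le ?_
        rw [hw, hreprpre']
        have h := nadd_le_nadd_left (zero_le (a := w))
          (repr pre ♯ ω ^ repr e * ((c : ℕ) : Ordinal))
        rwa [nadd_zero] at h
      refine ⟨?_, ?_, ?_⟩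
      · refine isLean_nadd_distinct ?_ hT1lean hRlean
        intro f g hf hg
        rcases memExp_scaleN hf with rfl | hf'
        · intro hfg
          subst hfg
          exact absurd (hlow' _ hg) (lt_irrefl _)
        · exact absurd hf' id
      · refine nfBelow_nadd ?_ ?_
        · refine nfBelow_scaleN hNFE ?_ NFBelow.zero
          refine hElt.trans_le (nadd_le_nadd_left ?_ _)
          rw [repr_oadd'']
          exact le_self_add
        · rw [hreprβ]; exact hRb
      · intro Z hZ
        rcases memExp_nadd hZ with hZ | hZ
        · rcases memExp_scaleN hZ with rfl | h0
          · exact ⟨_, hreprE⟩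
          · exact absurd h0 id
        · obtain ⟨w, hw⟩ := hRlow Z hZ
          refine ⟨ω ^ repr e * ((c : ℕ) : Ordinal) ♯ w, ?_⟩
          rw [hw, hreprpre', nadd_assoc]

theorem masterD (n l : ℕ) (hn : 1 ≤ n) (hl : 1 ≤ l) (k : ℕ) (β pre : ONote)
    (hβnf : β.NF) (hβlean : IsLean l β) (hβd : hdepth β ≤ k)
    (hprenf : pre.NF) (hprelean : IsLean l pre)
    (hsep : ∀ f g, MemExp f pre → MemExp g β → repr g < repr f) :
    IsLean (l * n * k) (DnAux n pre β) ∧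
    NFBelow (DnAux n pre β) (repr pre ♯ repr β) ∧
    (∀ X, MemExp X (DnAux n pre β) → ∃ w, repr X = repr pre ♯ w) :=
  masterDAux n l hn hl β.cnt k β pre le_rfl hβnf hβlean hβd hprenf hprelean hsep

end ONote

namespace ONote
open Ordinal

theorem masterDn (n l k : ℕ) (hn : 1 ≤ n) (hl : 1 ≤ l) {β : ONote} (hβnf : β.NF)
    (hβlean : IsLean l β) (hβd : hdepth β ≤ k) :
    IsLean (l * n * k) (Dn n β) ∧ NFBelow (Dn n β) (repr β) := by
  obtain ⟨h1, h2, -⟩ := masterD n l hn hl k β zero hβnf hβlean hβd NF.zero (isLean_zero _)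
    (fun f _ hf _ => absurd hf id)
  refine ⟨h1, ?_⟩
  rwa [show repr (zero : ONote) = 0 from rfl, zero_nadd] at h2

theorem masterDelta (n l k : ℕ) (hn : 1 ≤ n) (hl : 1 ≤ l) :
    ∀ (α pre : ONote), α.NF → IsLean l α → hdepth α ≤ k + 1 →
    pre.NF → IsLean l pre →
    (∀ f g, MemExp f pre → MemExp g α → repr g < repr f) →
    ∀ x ∈ deltaAux n pre α, IsLean (l + l * n * k) x := by
  intro α
  induction α with
  | zero => intro pre _ _ _ _ _ _ x hx; simp [ONote.deltaAux] at hx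
  | oadd e c rest ihe iha =>
    intro pre hαnf hαlean hαd hprenf hprelean hsep x hx
    have hNFe : NF e := hαnf.fst
    have hNFrest : NF rest := hαnf.snd
    have hrb : NFBelow rest (repr e) := hαnf.snd'
    rw [isLean_oadd_iff] at hαlean
    obtain ⟨hce, hle, hlrest⟩ := hαlean
    have hαd' : max (hdepth e + 1) (hdepth rest) ≤ k + 1 := hαd
    have hde : hdepth e ≤ k := by omega
    have hdrest : hdepth rest ≤ k + 1 := by omega
    have hsepr : ∀ g, MemExp g rest → repr g < repr e := fun g hg => (nf_of_memExp hrb hg).2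
    have hsepE : ∀ f, MemExp f pre → repr e < repr f := fun f hf => hsep f e hf (Or.inl rfl)
    obtain ⟨hDlean, hDb⟩ := masterDn n l k hn hl hNFe hle hde
    have hNFD : NF (Dn n e) := ⟨⟨_, hDb⟩⟩
    rw [ONote.deltaAux] at hx
    rcases List.mem_cons.1 hx with rfl | hx
    · have hNFS : NF (scaleN e ((c : ℕ) - 1) zero) := nf_scaleN hNFe NFBelow.zero
      have hNFPR : NF (nadd pre rest) := nf_nadd hprenf hNFrest
      have hPRlean : IsLean l (nadd pre rest) := by
        refine isLean_nadd_distinct ?_ hprelean hlrest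
        intro f g hf hg hfg; subst hfg
        exact absurd (hsep f f hf (Or.inr hg)) (lt_irrefl _)
      have hXlean : IsLean l (nadd (nadd pre rest) (scaleN e ((c : ℕ) - 1) zero)) := by
        refine isLean_nadd_distinct ?_ hPRlean
          (isLean_scaleN (by have := c.pos; omega) hle (isLean_zero _))
        intro f g hf hg
        rcases memExp_scaleN hg with rfl | hg'
        · rcases memExp_nadd hf with hf | hf
          · intro hfg; subst hfg; exact absurd (hsepE _ hf) (lt_irrefl _)
          · intro hfg; subst hfg; exact absurd (hsepr _ hf) (lt_irrefl _)
        · exact absurd hg' id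
      have hNFX : NF (nadd (nadd pre rest) (scaleN e ((c : ℕ) - 1) zero)) := nf_nadd hNFPR hNFS
      have hPlean : IsLean (l + l * n * k)
          (nadd (nadd (nadd pre rest) (scaleN e ((c : ℕ) - 1) zero)) (Dn n e)) :=
        isLean_nadd hXlean hDlean
      have hNFx : NF (nadd (nadd pre rest) (nadd (scaleN e ((c : ℕ) - 1) zero) (Dn n e))) :=
        nf_nadd hNFPR (nf_nadd hNFS hNFD)
      have hNFP : NF (nadd (nadd (nadd pre rest) (scaleN e ((c : ℕ) - 1) zero)) (Dn n e)) :=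
        nf_nadd hNFX hNFD
      have heq : nadd (nadd pre rest) (nadd (scaleN e ((c : ℕ) - 1) zero) (Dn n e)) =
          nadd (nadd (nadd pre rest) (scaleN e ((c : ℕ) - 1) zero)) (Dn n e) := by
        apply repr_eq_of_nf hNFx hNFP
        rw [repr_nadd hNFPR (nf_nadd hNFS hNFD), repr_nadd hNFS hNFD,
          repr_nadd hNFX hNFD, repr_nadd hNFPR hNFS, nadd_assoc]
      rw [heq]
      exact hPlean
    · have hNFoadde : NF (oadd e c zero) := hNFe.oadd c NFBelow.zero
      have hNFpre' : NF (nadd pre (oadd e c zero)) := nf_nadd hprenf hNFoadde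
      have hpre'lean : IsLean l (nadd pre (oadd e c zero)) := by
        refine isLean_nadd_distinct ?_ hprelean (isLean_oadd_iff.2 ⟨hce, hle, isLean_zero _⟩)
        intro f g hf hg
        rcases hg with rfl | hg
        · intro hfg; subst hfg; exact absurd (hsepE _ hf) (lt_irrefl _)
        · exact absurd hg id
      have hsep' : ∀ f g, MemExp f (nadd pre (oadd e c zero)) → MemExp g rest →
          repr g < repr f := by
        intro f g hf hg
        rcases memExp_nadd hf with hf | hf
        · exact hsep f g hf (Or.inr hg)
        · rcases hf with rfl | hf
          · exact hsepr g hg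
          · exact absurd hf id
      exact iha (nadd pre (oadd e c zero)) hNFrest hlrest hdrest hNFpre' hpre'lean hsep' x hx

end ONote


/-- Leanness of the derivation operators `D_n` and `δ_n`: fix
`n, ℓ, k ≥ 1`. (a) For every ordinal `β` such that `ω^β < Ω_{k+1}` and `ω^β` is `ℓ`-lean,
the ordinal `D_n(ω^β)` is `ℓ·n·k`-lean. (b) For every `ℓ`-lean ordinal `α` with
`0 < α < Ω_{k+1}`, every element of `δ_n(α)` is `(ℓ + ℓ·n·k)`-lean. -/
theorem isLean_Dn_and_deltaList (n ℓ k : ℕ) (hn : 1 ≤ n) (hl : 1 ≤ ℓ) (hk : 1 ≤ k) :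
    (∀ β : ONote, (ONote.oadd β 1 .zero).NF →
        ONote.oadd β 1 .zero < ONote.OmegaTower (k + 1) →
        ONote.IsLean ℓ (ONote.oadd β 1 .zero) →
        ONote.IsLean (ℓ * n * k) (ONote.Dn n β)) ∧
    (∀ α : ONote, α.NF → 0 < α → α < ONote.OmegaTower (k + 1) → ONote.IsLean ℓ α →
        ∀ α' ∈ ONote.deltaList n α, ONote.IsLean (ℓ + ℓ * n * k) α') := by
  constructor
  · intro β hnf hlt hlean
    have hβnf : β.NF := hnf.fst
    have hβlean : ONote.IsLean ℓ β := (ONote.isLean_oadd_iff.1 hlean).2.1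
    have hd : ONote.hdepth β ≤ k := by
      apply ONote.hdepth_le_of_lt_tower β k hβnf
      have h := ONote.lt_def.1 hlt
      rw [ONote.repr_omegaTower_succ] at h
      exact (Ordinal.opow_lt_opow_iff_right Ordinal.one_lt_omega0).1
        ((ONote.omega0_le_oadd β 1 ONote.zero).trans_lt h)
    exact (ONote.masterDn n ℓ k hn hl hβnf hβlean hd).1
  · intro α hnf _ hlt hlean α' hmem
    have hd : ONote.hdepth α ≤ k + 1 :=
      ONote.hdepth_le_of_lt_tower α (k + 1) hnf (ONote.lt_def.1 hlt)
    exact ONote.masterDelta n ℓ k hn hl α ONote.zero hnf hlean hd ONote.NF.zero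
      (ONote.isLean_zero _) (fun f _ hf _ => absurd hf id) α' hmem
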